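/- There exists a fair division instance with 3 agents, all of whom have supermodular valuations with nonnegative value on the grand bundle, for which no EQ1 allocation exists. Concretely: with M = {1,2,3,4,5}, valuations v_1(S) = v_2(S) = 0 if S = ∅ and 2|S| − 5 otherwise, and v_3(S) = |S|, no allocation (A_1, A_2, A_3) partitioning M is EQ1. -/
import Mathlib


def EQ1 {ι α : Type*} [DecidableEq α] (v : ι → Finset α → ℝ) (A : ι → Finset α) : Prop :=
  ∀ i j, v i (A i) < v j (A j) →
    (∃ g ∈ A j, v i (A i) ≥ v j (A j \ {g})) ∨
    (∃ c ∈ A i, v i (A i \ {c}) ≥ v j (A j))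

def IsPartition {ι α : Type*} (A : ι → Finset α) : Prop :=
  ∀ x : α, ∃! i, x ∈ A i

def Supermodular {α : Type*} [DecidableEq α] (f : Finset α → ℝ) : Prop :=
  ∀ S T : Finset α, S ⊆ T → ∀ e ∉ T, f (insert e S) - f S ≤ f (insert e T) - f T

/-- Valuation of agents 1 and 2: `0` on `∅`, and `2|S| - 5` otherwise. -/
noncomputable def v12 : Finset (Fin 5) → ℝ :=
  fun S => if S = ∅ then 0 else 2 * S.card - 5

/-- Valuation of agent 3: cardinality. -/
def vcard : Finset (Fin 5) → ℝ := fun S => S.card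

noncomputable def vAll : Fin 3 → Finset (Fin 5) → ℝ := ![v12, v12, vcard]

/-- Values as a function of the cardinality only. -/
def wI : Fin 3 → ℕ → ℤ :=
  ![fun n => if n = 0 then 0 else 2 * n - 5,
    fun n => if n = 0 then 0 else 2 * n - 5,
    fun n => n]

lemma vAll_card (i : Fin 3) (S : Finset (Fin 5)) :
    vAll i S = ((wI i S.card : ℤ) : ℝ) := by
  fin_cases i <;>
    simp [vAll, wI, v12, vcard, ← Finset.card_eq_zero] <;>
    split_ifs <;> push_cast <;> try ring
  all_goals simp_all

/-- The EQ1 condition at the level of bundle cardinalities. -/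
def EQ1N (n : Fin 3 → ℕ) : Prop :=
  ∀ i j, wI i (n i) < wI j (n j) →
    (n j ≠ 0 ∧ wI i (n i) ≥ wI j (n j - 1)) ∨
    (n i ≠ 0 ∧ wI i (n i - 1) ≥ wI j (n j))

instance (n : Fin 3 → ℕ) : Decidable (EQ1N n) := by unfold EQ1N; infer_instance

lemma keyN : ∀ a < 6, ∀ b < 6, ∀ c < 6, a + b + c = 5 → ¬ EQ1N ![a, b, c] := by decide

lemma vec_eta (n : Fin 3 → ℕ) : ![n 0, n 1, n 2] = n := by
  funext i; fin_cases i <;> rfl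

lemma v12_marginal (U : Finset (Fin 5)) (e : Fin 5) (he : e ∉ U) :
    v12 (insert e U) - v12 U = if U = ∅ then -3 else 2 := by
  by_cases hU : U = ∅
  · subst hU; simp [v12]; norm_num
  · simp [v12, hU, Finset.insert_ne_empty, Finset.card_insert_of_notMem he]
    push_cast
    ring

lemma v12_supermodular : Supermodular v12 := by
  intro S T hST e heT
  have heS : e ∉ S := fun h => heT (hST h)
  rw [v12_marginal S e heS, v12_marginal T e heT]
  by_cases hS : S = ∅
  · simp [hS]; split_ifs <;> norm_num
  · have hT : T ≠ ∅ := fun h => hS (Finset.subset_empty.mp (h ▸ hST))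
    simp [hS, hT]

/-- A concrete 3-agent instance on 5 items with supermodular valuations, each
valuing the grand bundle nonnegatively, in which no allocation is EQ1. -/
theorem no_eq1_instance :
    (∀ i, Supermodular (vAll i)) ∧ (∀ i, 0 ≤ vAll i Finset.univ) ∧
    ∀ A : Fin 3 → Finset (Fin 5), IsPartition A → ¬ EQ1 vAll A := by
  refine ⟨?_, ?_, ?_⟩
  · intro i
    fin_cases i
    · exact v12_supermodular
    · exact v12_supermodular
    · intro S T hST e heT
      have heS : e ∉ S := fun h => heT (hST h)
      simp [vAll, vcard, Finset.card_insert_of_notMem heT, Finset.card_insert_of_notMem heS]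
  · intro i
    fin_cases i <;>
      simp [vAll, v12, vcard, Finset.card_univ] <;> split_ifs <;> norm_num
  · intro A hA hEQ
    classical
    set f : Fin 5 → Fin 3 := fun x => (hA x).choose with hf
    have hmem : ∀ x, x ∈ A (f x) := fun x => (hA x).choose_spec.1
    have hiff : ∀ x i, x ∈ A i ↔ f x = i := by
      intro x i
      constructor
      · intro h
        exact ((hA x).choose_spec.2 i h).symm
      · rintro rfl; exact hmem x
    have hAeq : ∀ i, A i = Finset.univ.filter (fun x => f x = i) := by
      intro i; ext x; simp [hiff]
    set n : Fin 3 → ℕ := fun i => (A i).card with hn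
    have hsum : n 0 + n 1 + n 2 = 5 := by
      have h5 : (5 : ℕ) = ∑ i : Fin 3, (Finset.univ.filter (fun x => f x = i) : Finset (Fin 5)).card := by
        have := Finset.card_eq_sum_card_fiberwise
          (f := f) (s := (Finset.univ : Finset (Fin 5))) (t := (Finset.univ : Finset (Fin 3)))
          (fun x _ => Finset.mem_univ _)
        simpa [Finset.card_univ] using this
      have : (5 : ℕ) = ∑ i : Fin 3, n i := by
        rw [h5]; exact Finset.sum_congr rfl (fun i _ => congrArg Finset.card (hAeq i).symm)
      rw [Fin.sum_univ_three] at this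
      omega
    have hEQ1N : EQ1N n := by
      intro i j hlt
      have hlt' : vAll i (A i) < vAll j (A j) := by
        rw [vAll_card, vAll_card]; exact_mod_cast hlt
      rcases hEQ i j hlt' with ⟨g, hg, hge⟩ | ⟨c, hc, hge⟩
      · left
        have hne : n j ≠ 0 := by
          simp only [hn]
          exact Finset.card_ne_zero_of_mem hg
        refine ⟨hne, ?_⟩
        have hcard : (A j \ {g}).card = n j - 1 := by
          rw [Finset.card_sdiff_of_subset (by simpa using hg)]
          simp [hn]
        rw [vAll_card, vAll_card, hcard] at hge
        exact_mod_cast hge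
      · right
        have hne : n i ≠ 0 := by
          simp only [hn]
          exact Finset.card_ne_zero_of_mem hc
        refine ⟨hne, ?_⟩
        have hcard : (A i \ {c}).card = n i - 1 := by
          rw [Finset.card_sdiff_of_subset (by simpa using hc)]
          simp [hn]
        rw [vAll_card, vAll_card, hcard] at hge
        exact_mod_cast hge
    have := keyN (n 0) (by omega) (n 1) (by omega) (n 2) (by omega) (by omega)
    rw [vec_eta] at this
    exact this hEQ1N
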